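/- Let k be a commutative ring, R = k[x_1,…,x_d] a polynomial ring, S ⊆ R a multiplicative set and A = S⁻¹R (the same statement holds for A = k[[x_1,…,x_d]]). Let I ⊆ A be an ideal, m ≥ 1 an integer and n an integer with n ≥ m or n = ∞. Then for every n-integrable E ∈ HS_k(A/I;m) there exists an I-logarithmically n-integrable D ∈ HS_k(log I;m) with D̄ = E; that is, Π_m restricts to a surjection from the I-logarithmically n-integrable elements of HS_k(log I;m) onto the n-integrable elements of HS_k(A/I;m). -/

import Mathlib

open PowerSeries

set_option maxHeartbeats 1000000
set_option synthInstance.maxHeartbeats 400000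


/-- The ideal of `C⟦X⟧` generated by the `X^i` with `i > n`. -/
noncomputable def Jdl (C : Type*) [CommRing C] (n : ℕ∞) : Ideal (PowerSeries C) :=
  Ideal.span {g : PowerSeries C | ∃ i : ℕ, n < (i : ℕ∞) ∧ g = PowerSeries.X ^ i}

lemma coeff_eq_zero_of_mem_Jdl {C : Type*} [CommRing C] {n : ℕ∞} {f : PowerSeries C}
    (hf : f ∈ Jdl C n) : ∀ i : ℕ, (i : ℕ∞) ≤ n → PowerSeries.coeff i f = 0 := by
  induction hf using Submodule.span_induction with
  | mem x hx =>
    obtain ⟨j, hj, rfl⟩ := hx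
    intro i hi
    rw [PowerSeries.coeff_X_pow, if_neg]
    intro h; subst h; exact absurd hi (not_le.mpr hj)
  | zero => intro i _; simp
  | add x y hx hy h1 h2 => intro i hi; rw [map_add, h1 i hi, h2 i hi, add_zero]
  | smul a x hx h1 =>
    intro i hi
    rw [smul_eq_mul, PowerSeries.coeff_mul]
    refine Finset.sum_eq_zero fun p hp => ?_
    rw [Finset.HasAntidiagonal.mem_antidiagonal] at hp
    have hb : ((p.2 : ℕ∞)) ≤ n :=
      le_trans (by exact_mod_cast Nat.le.intro (Nat.add_comm p.1 p.2 ▸ hp)) hi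
    rw [h1 p.2 hb, mul_zero]

lemma Jdl_quot_eq {C : Type*} [CommRing C] (n : ℕ∞) {f g : PowerSeries C}
    (h : ∀ i : ℕ, (i : ℕ∞) ≤ n → PowerSeries.coeff i f = PowerSeries.coeff i g) :
    Ideal.Quotient.mk (Jdl C n) f = Ideal.Quotient.mk (Jdl C n) g := by
  cases n with
  | top => congr 1; ext i; exact h i le_top
  | coe N =>
    rw [Ideal.Quotient.eq]
    have hd : (PowerSeries.X : PowerSeries C) ^ (N + 1) ∣ f - g := by
      rw [PowerSeries.X_pow_dvd_iff]
      intro i hi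
      rw [map_sub, h i (by exact_mod_cast Nat.lt_succ_iff.mp hi), sub_self]
    obtain ⟨c, hc⟩ := hd
    rw [hc]
    exact Ideal.mul_mem_right _ _
      (Ideal.subset_span ⟨N + 1, by exact_mod_cast Nat.lt_succ_self N, rfl⟩)

lemma coeff_eq_of_Jdl_quot_eq {C : Type*} [CommRing C] {n : ℕ∞} {f g : PowerSeries C}
    (h : Ideal.Quotient.mk (Jdl C n) f = Ideal.Quotient.mk (Jdl C n) g)
    {i : ℕ} (hi : (i : ℕ∞) ≤ n) : PowerSeries.coeff i f = PowerSeries.coeff i g := by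
  have hfg : f - g ∈ Jdl C n := Ideal.Quotient.eq.mp h
  have := coeff_eq_zero_of_mem_Jdl hfg i hi
  rw [map_sub, sub_eq_zero] at this
  exact this

/-- `IsHS k A n D` says that the sequence `D` of `k`-linear endomorphisms of `A` is a
Hasse–Schmidt derivation of `A` over `k` of length `n` (with `n = ⊤` encoding length `∞`):
`D 0 = id` and the Leibniz rule `D i (x*y) = ∑_{r+s=i} D r x * D s y` holds for `1 ≤ i ≤ n`.
(The values `D i` for `i > n` are irrelevant.) -/
def IsHS (k A : Type*) [CommRing k] [CommRing A] [Algebra k A]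
    (n : ℕ∞) (D : ℕ → (A →ₗ[k] A)) : Prop :=
  D 0 = LinearMap.id ∧
  ∀ i : ℕ, 1 ≤ i → (i : ℕ∞) ≤ n → ∀ x y : A,
    D i (x * y) = ∑ p ∈ Finset.HasAntidiagonal.antidiagonal i, D p.1 x * D p.2 y

lemma IsHS.one_eq_zero {k A : Type*} [CommRing k] [CommRing A] [Algebra k A]
    {n : ℕ∞} {D : ℕ → (A →ₗ[k] A)} (hD : IsHS k A n D) :
    ∀ i : ℕ, 1 ≤ i → (i : ℕ∞) ≤ n → D i 1 = 0 := by
  intro i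
  induction i using Nat.strong_induction_on with
  | _ i IH =>
    intro h1 hn
    have key := hD.2 i h1 hn 1 1
    rw [one_mul] at key
    have hmem : ((0 : ℕ), i) ∈ Finset.HasAntidiagonal.antidiagonal i := by simp
    rw [← Finset.add_sum_erase _ _ hmem] at key
    have h0 : D 0 (1 : A) * D i 1 = D i 1 := by rw [hD.1]; simp
    have hrest : ∑ p ∈ (Finset.HasAntidiagonal.antidiagonal i).erase (0, i), D p.1 (1 : A) * D p.2 1
        = D i 1 := by
      rw [Finset.sum_eq_single_of_mem (i, 0)]
      · rw [hD.1]; simp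
      · rw [Finset.mem_erase]
        constructor
        · intro hc
          rw [Prod.ext_iff] at hc
          omega
        · simp
      · rintro ⟨a, b⟩ hp hne
        have hp' := Finset.mem_of_mem_erase hp
        rw [Finset.HasAntidiagonal.mem_antidiagonal] at hp'
        have hpe := Finset.ne_of_mem_erase hp
        have ha0 : a ≠ 0 := by
          intro h; apply hpe; rw [Prod.ext_iff]; omega
        have hai : a ≠ i := by
          intro h; apply hne; rw [Prod.ext_iff]; omega
        have hlt : a < i := by omega
        rw [IH a hlt (by omega) (le_trans (by exact_mod_cast hlt.le) hn), zero_mul]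
    rw [h0, hrest] at key
    nth_rewrite 1 [← add_zero (D i 1)] at key
    exact (add_left_cancel key).symm

theorem stmt10_aux (k : Type*) [CommRing k] (d : ℕ)
    (S : Submonoid (MvPolynomial (Fin d) k))
    (A : Type*) [CommRing A] [Algebra k A] [Algebra (MvPolynomial (Fin d) k) A]
    [IsScalarTower k (MvPolynomial (Fin d) k) A] [IsLocalization S A]
    (Q : Type*) [CommRing Q] [Algebra k Q]
    (pr : A →ₐ[k] Q) (hπs : Function.Surjective pr)
    (n : ℕ∞) (hn : 1 ≤ n)
    (Z : ℕ → (Q →ₗ[k] Q)) (hZ : IsHS k Q n Z) :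
    ∃ U : ℕ → (A →ₗ[k] A),
      IsHS k A n U ∧
      (∀ i : ℕ, (i : ℕ∞) ≤ n → ∀ a : A, pr (U i a) = Z i (pr a)) := by
  classical
  have hZ0 : ∀ q : Q, Z 0 q = q := fun q => by rw [hZ.1]; rfl
  -- lifts of the images of the variables under the HS derivation Z
  obtain ⟨c, hc0, hc⟩ : ∃ c : ℕ → Fin d → A,
      (∀ j, c 0 j = algebraMap (MvPolynomial (Fin d) k) A (MvPolynomial.X j)) ∧
      ∀ i j, pr (c i j)
        = Z i (pr
            (algebraMap (MvPolynomial (Fin d) k) A (MvPolynomial.X j))) := by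
    refine ⟨fun i j => if i = 0 then
        algebraMap (MvPolynomial (Fin d) k) A (MvPolynomial.X j)
      else (hπs (Z i (pr
        (algebraMap (MvPolynomial (Fin d) k) A (MvPolynomial.X j))))).choose,
      fun j => rfl, ?_⟩
    intro i j
    dsimp only
    rcases Nat.eq_zero_or_pos i with h | h
    · subst h
      rw [if_pos rfl, hZ0]
    · rw [if_neg (by omega : ¬ i = 0)]
      exact (hπs _).choose_spec
  -- the k-algebra morphism from polynomials into power series
  set F : Fin d → PowerSeries A := fun j => PowerSeries.mk fun i => c i j with hF
  set φ : MvPolynomial (Fin d) k →+* PowerSeries A :=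
    (MvPolynomial.aeval F :
      MvPolynomial (Fin d) k →ₐ[k] PowerSeries A).toRingHom with hφ
  have hCeq : ∀ r : k,
      algebraMap (MvPolynomial (Fin d) k) A (MvPolynomial.C r)
        = algebraMap k A r := by
    intro r
    rw [← MvPolynomial.algebraMap_eq]
    exact (IsScalarTower.algebraMap_apply k (MvPolynomial (Fin d) k) A r).symm
  have hφC : ∀ r : k, φ (MvPolynomial.C r)
      = PowerSeries.C (algebraMap k A r) := by
    intro r
    rw [hφ]
    simp only [AlgHom.toRingHom_eq_coe, RingHom.coe_coe, MvPolynomial.aeval_C]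
    rw [PowerSeries.algebraMap_apply]
  have hφX : ∀ j, φ (MvPolynomial.X j) = PowerSeries.mk fun i => c i j := by
    intro j
    rw [hφ]
    simp only [AlgHom.toRingHom_eq_coe, RingHom.coe_coe, MvPolynomial.aeval_X]
    rfl
  have hccφ : (PowerSeries.constantCoeff).comp φ
      = algebraMap (MvPolynomial (Fin d) k) A := by
    apply MvPolynomial.ringHom_ext
    · intro r
      rw [RingHom.comp_apply, hφC, PowerSeries.constantCoeff_C, hCeq]
    · intro j
      rw [RingHom.comp_apply, hφX, ← PowerSeries.coeff_zero_eq_constantCoeff_apply,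
        PowerSeries.coeff_mk, hc0]
  -- lift to the localization, valued in the truncated power series ring
  have hu : ∀ s : S, IsUnit (((Ideal.Quotient.mk (Jdl A n)).comp φ) s) := by
    intro s
    have h1 : IsUnit (φ (s : MvPolynomial (Fin d) k)) := by
      rw [PowerSeries.isUnit_iff_constantCoeff]
      have h2 := RingHom.congr_fun hccφ (s : MvPolynomial (Fin d) k)
      rw [RingHom.comp_apply] at h2
      rw [h2]
      exact IsLocalization.map_units A s
    exact h1.map (Ideal.Quotient.mk (Jdl A n))
  set Φ : A →+* PowerSeries A ⧸ Jdl A n :=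
    IsLocalization.lift hu with hΦdef
  have hΦa : ∀ p : MvPolynomial (Fin d) k,
      Φ (algebraMap (MvPolynomial (Fin d) k) A p)
        = Ideal.Quotient.mk (Jdl A n) (φ p) := by
    intro p
    rw [hΦdef]
    exact IsLocalization.lift_eq hu p
  -- choice of representatives
  obtain ⟨rep, hrep⟩ : ∃ rep : (PowerSeries A ⧸ Jdl A n) →
      PowerSeries A,
      ∀ b, Ideal.Quotient.mk (Jdl A n) (rep b) = b := by
    have h : ∀ b : PowerSeries A ⧸ Jdl A n,
        ∃ f, Ideal.Quotient.mk (Jdl A n) f = b := Ideal.Quotient.mk_surjective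
    exact ⟨fun b => (h b).choose, fun b => (h b).choose_spec⟩
  have hkey : ∀ (f : PowerSeries A) (i : ℕ), (i : ℕ∞) ≤ n →
      PowerSeries.coeff i
        (rep (Ideal.Quotient.mk (Jdl A n) f))
      = PowerSeries.coeff i f := by
    intro f i hi
    exact coeff_eq_of_Jdl_quot_eq (by rw [hrep]) hi
  have hΦC : ∀ r : k, Φ (algebraMap k A r)
      = Ideal.Quotient.mk (Jdl A n)
          (PowerSeries.C (algebraMap k A r)) := by
    intro r
    rw [← hCeq r, hΦa, hφC, hCeq]
  -- the coefficient maps as k-linear endomorphisms of the localization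
  have hlin : ∀ i : ℕ, (i : ℕ∞) ≤ n → ∃ L : A →ₗ[k] A,
      ∀ a, L a = PowerSeries.coeff i (rep (Φ a)) := by
    intro i hi
    refine ⟨⟨⟨fun a => PowerSeries.coeff i (rep (Φ a)), ?_⟩, ?_⟩, fun a => rfl⟩
    · intro a b
      have h1 : Φ (a + b) = Ideal.Quotient.mk (Jdl A n)
          (rep (Φ a) + rep (Φ b)) := by
        rw [map_add (Ideal.Quotient.mk (Jdl A n)), hrep, hrep, map_add]
      rw [h1, hkey _ i hi, map_add]
    · intro r a
      dsimp only
      have h1 : Φ (r • a) = Ideal.Quotient.mk (Jdl A n)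
          (PowerSeries.C (algebraMap k A r) * rep (Φ a)) := by
        conv_lhs => rw [Algebra.smul_def, map_mul, hΦC, ← hrep (Φ a),
          ← map_mul (Ideal.Quotient.mk (Jdl A n))]
      rw [h1, hkey _ i hi, PowerSeries.coeff_C_mul, ← Algebra.smul_def]
      rfl
  obtain ⟨U, hUdef⟩ : ∃ U : ℕ → A →ₗ[k] A,
      ∀ i : ℕ, (i : ℕ∞) ≤ n → ∀ a : A,
        U i a = PowerSeries.coeff i (rep (Φ a)) := by
    refine ⟨fun i => if h : (i : ℕ∞) ≤ n then (hlin i h).choose else 0, ?_⟩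
    intro i h a
    dsimp only
    rw [dif_pos h]
    exact (hlin i h).choose_spec a
  -- evaluation at 0 is a retraction of Φ
  obtain ⟨ε, hε⟩ : ∃ ε : (PowerSeries A ⧸ Jdl A n) →+* A,
      ∀ f : PowerSeries A,
        ε (Ideal.Quotient.mk (Jdl A n) f)
          = PowerSeries.constantCoeff f := by
    have hker : ∀ f ∈ Jdl A n,
        PowerSeries.constantCoeff f = 0 := by
      intro f hf
      have h0 := coeff_eq_zero_of_mem_Jdl hf 0 (by simp)
      rwa [PowerSeries.coeff_zero_eq_constantCoeff_apply] at h0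
    exact ⟨Ideal.Quotient.lift _ _ hker, fun f => Ideal.Quotient.lift_mk _ _ _⟩
  have hεΦ : ∀ a : A, ε (Φ a) = a := by
    have hcomp : ε.comp Φ = RingHom.id A := by
      apply IsLocalization.ringHom_ext S
      refine RingHom.ext fun p => ?_
      rw [RingHom.comp_apply, RingHom.comp_apply, RingHom.comp_apply, RingHom.id_apply,
        hΦa, hε]
      exact RingHom.congr_fun hccφ p
    intro a
    have := RingHom.congr_fun hcomp a
    rwa [RingHom.comp_apply, RingHom.id_apply] at this
  have hU0 : U 0 = LinearMap.id := by
    apply LinearMap.ext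
    intro a
    rw [hUdef 0 (by simp) a, PowerSeries.coeff_zero_eq_constantCoeff_apply, ← hε, hrep, hεΦ]
    rfl
  -- the Leibniz rule for U
  have hULeib : ∀ i : ℕ, 1 ≤ i → (i : ℕ∞) ≤ n → ∀ x y : A,
      U i (x * y) = ∑ p ∈ Finset.HasAntidiagonal.antidiagonal i, U p.1 x * U p.2 y := by
    intro i _ hi x y
    have h1 : Φ (x * y) = Ideal.Quotient.mk (Jdl A n)
        (rep (Φ x) * rep (Φ y)) := by
      conv_lhs => rw [map_mul, ← hrep (Φ x), ← hrep (Φ y),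
        ← map_mul (Ideal.Quotient.mk (Jdl A n))]
    rw [hUdef i hi, h1, hkey _ i hi, PowerSeries.coeff_mul]
    refine Finset.sum_congr rfl fun p hp => ?_
    rw [Finset.HasAntidiagonal.mem_antidiagonal] at hp
    have h2 : ((p.1 : ℕ∞)) ≤ n := le_trans (by exact_mod_cast Nat.le.intro hp) hi
    have h3 : ((p.2 : ℕ∞)) ≤ n :=
      le_trans (by exact_mod_cast Nat.le.intro (Nat.add_comm p.1 p.2 ▸ hp)) hi
    rw [hUdef p.1 h2, hUdef p.2 h3]
  -- the quotient-side morphism induced by Z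
  have hZone : ∀ i : ℕ, 1 ≤ i → (i : ℕ∞) ≤ n → Z i 1 = 0 := hZ.one_eq_zero
  obtain ⟨ψ, hψ⟩ : ∃ ψ : Q →+*
      (PowerSeries Q ⧸ Jdl Q n),
      ∀ a, ψ a = Ideal.Quotient.mk (Jdl Q n)
        (PowerSeries.mk fun i => Z i a) := by
    refine ⟨{ toFun := fun a => Ideal.Quotient.mk _ (PowerSeries.mk fun i => Z i a),
              map_one' := ?_, map_mul' := ?_, map_zero' := ?_, map_add' := ?_ }, fun a => rfl⟩
    ·
      rw [← map_one (Ideal.Quotient.mk (Jdl Q n))]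
      apply Jdl_quot_eq
      intro i hi
      rw [PowerSeries.coeff_mk, PowerSeries.coeff_one]
      rcases Nat.eq_zero_or_pos i with h | h
      · subst h; rw [if_pos rfl, hZ0]
      · rw [if_neg (by omega : ¬ i = 0), hZone i h hi]
    · intro x y
      rw [← map_mul (Ideal.Quotient.mk (Jdl Q n))]
      apply Jdl_quot_eq
      intro i hi
      rw [PowerSeries.coeff_mk, PowerSeries.coeff_mul]
      rcases Nat.eq_zero_or_pos i with h | h
      · subst h
        rw [Finset.Nat.antidiagonal_zero, Finset.sum_singleton,
          PowerSeries.coeff_mk, PowerSeries.coeff_mk, hZ0, hZ0, hZ0]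
      · rw [hZ.2 i h hi x y]
        exact Finset.sum_congr rfl fun p hp => by
          rw [PowerSeries.coeff_mk, PowerSeries.coeff_mk]
    ·
      rw [← map_zero (Ideal.Quotient.mk (Jdl Q n))]
      congr 1
      ext i
      rw [PowerSeries.coeff_mk, map_zero, map_zero]
    · intro x y
      rw [← map_add (Ideal.Quotient.mk (Jdl Q n))]
      congr 1
      ext i
      rw [PowerSeries.coeff_mk, map_add (PowerSeries.coeff (R := Q) i), PowerSeries.coeff_mk,
        PowerSeries.coeff_mk, map_add]
  -- reduction of power series mod I
  obtain ⟨πB, hπB⟩ : ∃ πB : (PowerSeries A ⧸ Jdl A n) →+*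
      (PowerSeries Q ⧸ Jdl Q n),
      ∀ f, πB (Ideal.Quotient.mk (Jdl A n) f)
        = Ideal.Quotient.mk (Jdl Q n)
            (PowerSeries.map (pr) f) := by
    have hker : Jdl A n ≤ RingHom.ker
        ((Ideal.Quotient.mk (Jdl Q n)).comp
          (PowerSeries.map (pr))) := by
      apply Ideal.span_le.mpr
      rintro g ⟨i, hi, rfl⟩
      rw [SetLike.mem_coe, RingHom.mem_ker, RingHom.comp_apply, map_pow, PowerSeries.map_X]
      exact Ideal.Quotient.eq_zero_iff_mem.mpr (Ideal.subset_span ⟨i, hi, rfl⟩)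
    exact ⟨Ideal.Quotient.lift _ _ (fun f hf => hker hf),
      fun f => Ideal.Quotient.lift_mk _ _ _⟩
  -- the key commutation relation
  have hcommHom : πB.comp Φ = ψ.comp (pr) := by
    apply IsLocalization.ringHom_ext S
    apply MvPolynomial.ringHom_ext
    · intro r
      rw [RingHom.comp_apply, RingHom.comp_apply, RingHom.comp_apply, RingHom.comp_apply,
        hCeq, hΦC, hπB, PowerSeries.map_C, hψ]
      apply Jdl_quot_eq
      intro i hi
      rw [PowerSeries.coeff_mk, PowerSeries.coeff_C]
      simp only [AlgHom.coe_toRingHom]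
      have hq : pr (algebraMap k A r)
          = r • (1 : Q) := by
        rw [pr.commutes r, Algebra.algebraMap_eq_smul_one]
      rcases Nat.eq_zero_or_pos i with h | h
      · subst h
        rw [if_pos rfl]
        exact (hZ0 _).symm
      · rw [if_neg (by omega : ¬ i = 0), hq, map_smul, hZone i h hi, smul_zero]
    · intro j
      rw [RingHom.comp_apply, RingHom.comp_apply, RingHom.comp_apply, RingHom.comp_apply,
        hΦa, hφX, hπB, hψ]
      congr 1
      ext i
      rw [PowerSeries.coeff_map, PowerSeries.coeff_mk, PowerSeries.coeff_mk]
      simp only [AlgHom.coe_toRingHom]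
      rw [hc]
  -- U is compatible with Z
  have hπU : ∀ i : ℕ, (i : ℕ∞) ≤ n → ∀ a : A,
      pr (U i a) = Z i (pr a) := by
    intro i hi a
    rw [hUdef i hi a]
    have h1 : Ideal.Quotient.mk (Jdl Q n)
        (PowerSeries.map (pr) (rep (Φ a)))
        = Ideal.Quotient.mk (Jdl Q n)
          (PowerSeries.mk fun i => Z i (pr a)) := by
      rw [← hπB, hrep, ← hψ]
      exact RingHom.congr_fun hcommHom a
    have h2 := coeff_eq_of_Jdl_quot_eq h1 hi
    rw [PowerSeries.coeff_map, PowerSeries.coeff_mk] at h2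
    exact h2
  exact ⟨U, ⟨hU0, hULeib⟩, hπU⟩

/-- **Statement 10.** Let `R = k[x_1,…,x_d]`, `S ⊆ R` multiplicative, `A = S⁻¹R`,
`I ⊆ A` an ideal, `1 ≤ m` finite and `n ≥ m` (possibly `∞`). Every `n`-integrable
`E ∈ HS_k(A/I;m)` is induced by some `I`-logarithmically `n`-integrable
`D ∈ HS_k(log I;m)`. -/
theorem stmt_10 (k : Type*) [CommRing k] (d : ℕ)
    (S : Submonoid (MvPolynomial (Fin d) k))
    (I : Ideal (Localization S)) (m : ℕ) (hm : 1 ≤ m) (n : ℕ∞) (hmn : (m : ℕ∞) ≤ n)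
    (E : ℕ → ((Localization S ⧸ I) →ₗ[k] (Localization S ⧸ I)))
    (hE : IsHS k (Localization S ⧸ I) m E)
    (hint : ∃ Z : ℕ → ((Localization S ⧸ I) →ₗ[k] (Localization S ⧸ I)),
      IsHS k (Localization S ⧸ I) n Z ∧ ∀ i ≤ m, Z i = E i) :
    ∃ D : ℕ → (Localization S →ₗ[k] Localization S),
      IsHS k (Localization S) m D ∧
      (∀ i ≤ m, ∀ x ∈ I, D i x ∈ I) ∧
      (∀ i ≤ m, ∀ a : Localization S,
        Ideal.Quotient.mk I (D i a) = E i (Ideal.Quotient.mk I a)) ∧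
      ∃ U : ℕ → (Localization S →ₗ[k] Localization S),
        IsHS k (Localization S) n U ∧
        (∀ i : ℕ, (i : ℕ∞) ≤ n → ∀ x ∈ I, U i x ∈ I) ∧
        (∀ i ≤ m, U i = D i) := by
  obtain ⟨Z, hZ, hZE⟩ := hint
  have h1n : (1 : ℕ∞) ≤ n := le_trans (by exact_mod_cast hm) hmn
  obtain ⟨U, hUHS, hUcomp⟩ := stmt10_aux k d S (Localization S) (Localization S ⧸ I)
    (Ideal.Quotient.mkₐ k I) (Ideal.Quotient.mkₐ_surjective k I) n h1n Z hZ
  have hUcomp' : ∀ i : ℕ, (i : ℕ∞) ≤ n → ∀ a : Localization S,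
      Ideal.Quotient.mk I (U i a) = Z i (Ideal.Quotient.mk I a) := by
    intro i hi a
    have h := hUcomp i hi a
    rwa [Ideal.Quotient.mkₐ_eq_mk] at h
  have hUlog : ∀ i : ℕ, (i : ℕ∞) ≤ n → ∀ x ∈ I, U i x ∈ I := by
    intro i hi x hx
    have h := hUcomp' i hi x
    rw [Ideal.Quotient.eq_zero_iff_mem.mpr hx, map_zero] at h
    exact Ideal.Quotient.eq_zero_iff_mem.mp h
  have hcast : ∀ i : ℕ, i ≤ m → (i : ℕ∞) ≤ n := fun i hi =>
    le_trans (by exact_mod_cast hi) hmn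
  refine ⟨U, ⟨hUHS.1, fun i h1 hi x y => hUHS.2 i h1 (le_trans hi hmn) x y⟩,
    fun i hi x hx => hUlog i (hcast i hi) x hx, ?_, U, hUHS, hUlog, fun i _ => rfl⟩
  intro i hi a
  rw [hUcomp' i (hcast i hi) a, hZE i hi]
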